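/- In a unital *-algebra A, for every b ∈ A one has ((1+b†b)⁻¹)† (1+b†b)⁻¹ ≤ 1 whenever 1+b†b is invertible, where x ≤ y means y - x lies in the positive cone Π(A) of finite sums Σ λᵢ aᵢ†aᵢ with λᵢ > 0. -/

import Mathlib

/-- The positive cone `Π(A)` of a unital involutive algebra: finite sums
`Σᵢ λᵢ • (aᵢ† * aᵢ)` with `λᵢ > 0` real. `x ≤ y` means `y - x ∈ Π(A)`. -/
def posCone (A : Type*) [Ring A] [Algebra ℂ A] [StarRing A] : Set A :=
  { x | ∃ (n : ℕ) (lam : Fin n → ℝ) (a : Fin n → A),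
      (∀ i, 0 < lam i) ∧ x = ∑ i, ((lam i : ℂ)) • (star (a i) * a i) }

/-- In a unital `*`-algebra `A`, for every `b ∈ A`, if `1 + b†b` is
invertible (with two-sided inverse `c`), then `((1+b†b)⁻¹)† (1+b†b)⁻¹ ≤ 1`, i.e.
`1 - c† c` lies in the positive cone. -/
theorem star_inv_mul_inv_le_one
    {A : Type*} [Ring A] [Algebra ℂ A] [StarRing A] [StarModule ℂ A]
    (b c : A)
    (hc : c * (1 + star b * b) = 1) (hc' : (1 + star b * b) * c = 1) :
    (1 : A) - star c * c ∈ posCone A := by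
  set t : A := star b * b with ht
  have hst : star t = t := by simp [ht, star_mul, mul_assoc]
  -- star of hc' : star c * (1 + t) = 1
  have h1 : star c * (1 + t) = 1 := by
    have := congrArg star hc'
    simpa [star_mul, star_add, hst] using this
  have key : (1 : A) - star c * c
      = (2 : ℂ) • (star (b * c) * (b * c)) + (1 : ℂ) • (star (t * c) * (t * c)) := by
    have e1 : star c * ((1 + t) * ((1 + t) * c)) = 1 := by
      rw [hc', mul_one, h1]
    have expand : star c * ((1 + t) * ((1 + t) * c))
        = star c * c + (2 : ℂ) • (star c * t * c) + star c * t * (t * c) := by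
      simp only [add_mul, mul_add, one_mul, mul_one, two_smul, smul_add]
      noncomm_ring
    rw [expand] at e1
    have h1' : star (b * c) * (b * c) = star c * t * c := by
      simp [star_mul, ht, mul_assoc]
    have h2' : star (t * c) * (t * c) = star c * t * (t * c) := by
      simp [star_mul, hst, mul_assoc]
    rw [h1', h2', one_smul]
    linear_combination (norm := noncomm_ring) -e1
  refine ⟨2, ![2, 1], ![b * c, t * c], ?_, ?_⟩
  · intro i; fin_cases i <;> norm_num
  · rw [key, Fin.sum_univ_two]; simp
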